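/- arXiv:math-ph/0302001 — 2 statements merged into one kernel-verified Lean document; each statement's English description precedes it below -/
import Mathlib

section
/- Let g : ℝ≥0 → ℝ be continuously differentiable with g(y) ≥ a₁ > 0 and g(y) + 2 g'(y) y ≥ a₃ > 0 for all y ≥ 0. Then for all vectors a, b ∈ ℝᵐ, ⟨g(|a|²) a − g(|b|²) b, a − b⟩ ≥ min(a₁, a₃) |a − b|². -/
theorem stmt1 (m : ℕ) (g g' : ℝ → ℝ) (a₁ a₃ : ℝ) (ha₁ : 0 < a₁) (ha₃ : 0 < a₃)
    (hderiv : ∀ y ≥ (0:ℝ), HasDerivAt g (g' y) y)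
    (hcont : ContinuousOn g' (Set.Ici 0))
    (hlow : ∀ y ≥ (0:ℝ), g y ≥ a₁)
    (hmono : ∀ y ≥ (0:ℝ), g y + 2 * g' y * y ≥ a₃)
    (a b : EuclideanSpace ℝ (Fin m)) :
    inner ℝ (g (‖a‖ ^ 2) • a - g (‖b‖ ^ 2) • b) (a - b) ≥ min a₁ a₃ * ‖a - b‖ ^ 2 := by
  set h : EuclideanSpace ℝ (Fin m) := a - b with hh
  set c : ℝ := min a₁ a₃ with hc
  set u : ℝ → ℝ := fun t => ‖b‖ ^ 2 + 2 * t * (inner ℝ b h : ℝ) + t ^ 2 * ‖h‖ ^ 2 with hu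
  set v : ℝ → ℝ := fun t => (inner ℝ b h : ℝ) + t * ‖h‖ ^ 2 with hv
  have huz : ∀ t : ℝ, u t = ‖b + t • h‖ ^ 2 := by
    intro t
    rw [hu]
    have := norm_add_sq_real b (t • h)
    rw [this, real_inner_smul_right, norm_smul]
    simp [mul_pow]
    ring
  have hvz : ∀ t : ℝ, v t = (inner ℝ (b + t • h) h : ℝ) := by
    intro t
    rw [hv]
    rw [inner_add_left, real_inner_smul_left, real_inner_self_eq_norm_sq]
  have hu0 : ∀ t : ℝ, 0 ≤ u t := by
    intro t; rw [huz]; positivity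
  set f : ℝ → ℝ := fun t => g (u t) * v t with hf
  set f' : ℝ → ℝ := fun t => g' (u t) * (2 * v t) * v t + g (u t) * ‖h‖ ^ 2 with hf'
  have hud : ∀ t : ℝ, HasDerivAt u (2 * v t) t := by
    intro t
    have H := (((hasDerivAt_const t (‖b‖^2 : ℝ)).add
        (((hasDerivAt_id t).const_mul 2).mul_const (inner ℝ b h : ℝ))).add
        ((hasDerivAt_pow 2 t).mul_const (‖h‖^2)))
    exact H.congr_deriv (by rw [hv]; push_cast; ring)
  have hvd : ∀ t : ℝ, HasDerivAt v (‖h‖ ^ 2) t := by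
    intro t
    have : HasDerivAt v (0 + 1 * ‖h‖ ^ 2) t :=
      (hasDerivAt_const t _).add ((hasDerivAt_id t).mul_const _)
    simpa using this
  have hfd : ∀ t : ℝ, HasDerivAt f (f' t) t := by
    intro t
    have hg : HasDerivAt (fun s => g (u s)) (g' (u t) * (2 * v t)) t :=
      (hderiv (u t) (hu0 t)).comp t (hud t)
    exact hg.mul (hvd t)
  have hbd : ∀ t : ℝ, c * ‖h‖ ^ 2 ≤ f' t := by
    intro t
    have hgl := hlow (u t) (hu0 t)
    have hgm := hmono (u t) (hu0 t)
    rcases le_or_gt 0 (g' (u t)) with hpos | hneg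
    · have h1 : c * ‖h‖ ^ 2 ≤ a₁ * ‖h‖ ^ 2 :=
        mul_le_mul_of_nonneg_right (min_le_left _ _) (by positivity)
      have h2 : (0:ℝ) ≤ g' (u t) * (2 * v t) * v t := by
        have : g' (u t) * (2 * v t) * v t = 2 * g' (u t) * (v t) ^ 2 := by ring
        rw [this]; positivity
      have h3 : a₁ * ‖h‖ ^ 2 ≤ g (u t) * ‖h‖ ^ 2 :=
        mul_le_mul_of_nonneg_right hgl (by positivity)
      rw [hf']; dsimp only; linarith
    · -- Cauchy-Schwarz: v t ^ 2 ≤ u t * ‖h‖ ^ 2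
      have hcs : (v t) ^ 2 ≤ u t * ‖h‖ ^ 2 := by
        rw [hvz, huz]
        have := abs_real_inner_le_norm (b + t • h) h
        calc (inner ℝ (b + t • h) h : ℝ) ^ 2 = |(inner ℝ (b + t • h) h : ℝ)| ^ 2 := (sq_abs _).symm
          _ ≤ (‖b + t • h‖ * ‖h‖) ^ 2 := by
              apply pow_le_pow_left₀ (abs_nonneg _) this
          _ = ‖b + t • h‖ ^ 2 * ‖h‖ ^ 2 := by ring
      have h2 : 2 * g' (u t) * (u t * ‖h‖ ^ 2) ≤ 2 * g' (u t) * (v t) ^ 2 := by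
        apply mul_le_mul_of_nonpos_left hcs (by linarith)
      have hA : f' t = 2 * g' (u t) * (v t) ^ 2 + g (u t) * ‖h‖ ^ 2 := by rw [hf']; dsimp only; ring
      have h3 : c * ‖h‖ ^ 2 ≤ a₃ * ‖h‖ ^ 2 :=
        mul_le_mul_of_nonneg_right (min_le_right _ _) (by positivity)
      have h4 : a₃ * ‖h‖ ^ 2 ≤ (g (u t) + 2 * g' (u t) * u t) * ‖h‖ ^ 2 :=
        mul_le_mul_of_nonneg_right hgm (by positivity)
      nlinarith [h2, h3, h4]
  -- F t = f t - c * ‖h‖^2 * t is monotone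
  set F : ℝ → ℝ := fun t => f t - c * ‖h‖ ^ 2 * t with hF
  have hFd : ∀ t : ℝ, HasDerivAt F (f' t - c * ‖h‖ ^ 2) t := by
    intro t
    have := (hfd t).sub ((hasDerivAt_id t).const_mul (c * ‖h‖ ^ 2))
    simp only [mul_one] at this
    exact this
  have hFmono : Monotone F :=
    monotone_of_hasDerivAt_nonneg hFd (fun t => sub_nonneg.2 (hbd t))
  have key := hFmono (show (0:ℝ) ≤ 1 by norm_num)
  rw [hF] at key
  simp only [mul_zero, mul_one, sub_zero] at key
  -- f 1 - f 0 ≥ c * ‖h‖^2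
  have hb1 : b + (1:ℝ) • h = a := by rw [one_smul, hh]; abel
  have hb0 : b + (0:ℝ) • h = b := by rw [zero_smul, add_zero]
  have hf1 : f 1 = (inner ℝ (g (‖a‖ ^ 2) • a) h : ℝ) := by
    rw [hf]
    simp only
    rw [hvz]
    have : u 1 = ‖a‖ ^ 2 := by rw [huz, hb1]
    rw [this, hb1, real_inner_smul_left]
  have hf0 : f 0 = (inner ℝ (g (‖b‖ ^ 2) • b) h : ℝ) := by
    rw [hf]
    simp only
    rw [hvz]
    have : u 0 = ‖b‖ ^ 2 := by rw [huz, hb0]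
    rw [this, hb0, real_inner_smul_left]
  have : (inner ℝ (g (‖a‖ ^ 2) • a - g (‖b‖ ^ 2) • b) h : ℝ) = f 1 - f 0 := by
    rw [inner_sub_left, hf1, hf0]
  rw [ge_iff_le, this]
  linarith [key]
end

section
/- Let g : ℝ≥0 → ℝ be continuously differentiable with a₁ ≤ g(y) ≤ a₂, g(y) + 2g'(y)y ≥ a₃, and |g'(y)|y ≤ a₄ for all y ≥ 0 (a₁,…,a₄ > 0). Then the map F : ℝᵐ → ℝᵐ, F(z) = g(|z|²) z, is a bijection of ℝᵐ onto itself, with inverse Lipschitz continuous with constant 1/min(a₁, a₃). -/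
open RealInnerProductSpace

section Mono

variable {E : Type*} [NormedAddCommGroup E] [InnerProductSpace ℝ E]

/-- Strong monotonicity of `z ↦ g (‖z‖²) • z`. -/
lemma strong_mono (g g' : ℝ → ℝ) (a₁ a₃ : ℝ)
    (hderiv : ∀ y ≥ (0:ℝ), HasDerivAt g (g' y) y)
    (hlb : ∀ y ≥ (0:ℝ), a₁ ≤ g y)
    (hmono : ∀ y ≥ (0:ℝ), g y + 2 * g' y * y ≥ a₃)
    (a b : E) :
    min a₁ a₃ * ‖a - b‖ ^ 2 ≤ ⟪g (‖a‖ ^ 2) • a - g (‖b‖ ^ 2) • b, a - b⟫ := by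
  set c := min a₁ a₃ with hc
  set h : E := a - b with hh
  -- the curve z t = b + t • h
  set z : ℝ → E := fun t => b + t • h with hz
  set q : ℝ → ℝ := fun t => ⟪z t, z t⟫ with hq
  set p : ℝ → ℝ := fun t => ⟪z t, h⟫ with hp
  set φ : ℝ → ℝ := fun t => g (q t) * p t with hφ
  have hznonneg : ∀ t, (0:ℝ) ≤ q t := fun t => real_inner_self_nonneg
  have hzderiv : ∀ t : ℝ, HasDerivAt z h t := by
    intro t
    simpa [hz] using ((hasDerivAt_id t).smul_const h).const_add b
  have hqderiv : ∀ t : ℝ, HasDerivAt q (2 * p t) t := by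
    intro t
    have := (hzderiv t).inner ℝ (hzderiv t)
    simpa [hq, hp, real_inner_comm, two_mul] using this
  have hpderiv : ∀ t : ℝ, HasDerivAt p (‖h‖ ^ 2) t := by
    intro t
    have := (hzderiv t).inner ℝ (hasDerivAt_const t h)
    simpa [hp, real_inner_self_eq_norm_sq] using this
  have hφderiv : ∀ t : ℝ, HasDerivAt φ
      (g' (q t) * (2 * p t) * p t + g (q t) * ‖h‖ ^ 2) t := by
    intro t
    have H := ((hderiv (q t) (hznonneg t)).comp t (hqderiv t)).mul (hpderiv t)
    simp only [Function.comp] at H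
    exact H
  -- the derivative is ≥ c * ‖h‖^2
  have key : ∀ t : ℝ, c * ‖h‖ ^ 2 ≤ g' (q t) * (2 * p t) * p t + g (q t) * ‖h‖ ^ 2 := by
    intro t
    have hq0 := hznonneg t
    have hCS : p t ^ 2 ≤ q t * ‖h‖ ^ 2 := by
      have h1 : |p t| ≤ ‖z t‖ * ‖h‖ := abs_real_inner_le_norm _ _
      have h2 : p t ^ 2 ≤ (‖z t‖ * ‖h‖) ^ 2 := by
        rw [← sq_abs]; exact pow_le_pow_left₀ (abs_nonneg _) h1 2
      calc p t ^ 2 ≤ (‖z t‖ * ‖h‖) ^ 2 := h2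
        _ = q t * ‖h‖ ^ 2 := by
          simp only [hq, mul_pow, real_inner_self_eq_norm_sq]
    rcases le_or_gt 0 (g' (q t)) with hg' | hg'
    · have : a₁ * ‖h‖ ^ 2 ≤ g (q t) * ‖h‖ ^ 2 :=
        mul_le_mul_of_nonneg_right (hlb _ hq0) (by positivity)
      nlinarith [min_le_left a₁ a₃, sq_nonneg (p t), sq_nonneg ‖h‖]
    · have h3 := hmono (q t) hq0
      nlinarith [min_le_right a₁ a₃, sq_nonneg ‖h‖]
  -- monotonicity of ψ t = φ t - c‖h‖² t
  have hmonoφ : φ 0 + c * ‖h‖ ^ 2 * 1 ≤ φ 1 := by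
    have hψ : Monotone (fun t => φ t - c * ‖h‖ ^ 2 * t) := by
      apply monotone_of_deriv_nonneg
      · intro t
        exact ((hφderiv t).sub ((hasDerivAt_id t).const_mul _)).differentiableAt
      · intro t
        have hd : HasDerivAt (fun t => φ t - c * ‖h‖ ^ 2 * t)
            (g' (q t) * (2 * p t) * p t + g (q t) * ‖h‖ ^ 2 - c * ‖h‖ ^ 2) t := by
          exact ((hφderiv t).sub ((hasDerivAt_id t).const_mul (c * ‖h‖ ^ 2))).congr_deriv (by ring)
        rw [hd.deriv]
        linarith [key t]
    have := hψ (show (0:ℝ) ≤ 1 by norm_num)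
    simp only at this
    linarith
  -- φ 1 - φ 0 = ⟪F a - F b, h⟫
  have hz1 : z 1 = a := by simp [hz, hh]
  have hz0 : z 0 = b := by simp [hz]
  have hq1 : q 1 = ‖a‖ ^ 2 := by rw [hq]; simp only [hz1]; rw [real_inner_self_eq_norm_sq]
  have hq0' : q 0 = ‖b‖ ^ 2 := by rw [hq]; simp only [hz0]; rw [real_inner_self_eq_norm_sq]
  have : φ 1 - φ 0 = ⟪g (‖a‖ ^ 2) • a - g (‖b‖ ^ 2) • b, a - b⟫ := by
    simp only [hφ, hp, hq1, hq0', hz1, hz0]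
    rw [inner_sub_left, real_inner_smul_left, real_inner_smul_left, ← hh]
  linarith [hmonoφ, this.symm.le, this.le]

end Mono

theorem stmt15 (m : ℕ) (g g' : ℝ → ℝ) (a₁ a₂ a₃ a₄ : ℝ)
    (ha₁ : 0 < a₁) (ha₂ : 0 < a₂) (ha₃ : 0 < a₃) (ha₄ : 0 < a₄)
    (hderiv : ∀ y ≥ (0:ℝ), HasDerivAt g (g' y) y)
    (hcont : ContinuousOn g' (Set.Ici 0))
    (hbounds : ∀ y ≥ (0:ℝ), a₁ ≤ g y ∧ g y ≤ a₂)
    (hmono : ∀ y ≥ (0:ℝ), g y + 2 * g' y * y ≥ a₃)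
    (hbd : ∀ y ≥ (0:ℝ), |g' y| * y ≤ a₄) :
    Function.Bijective (fun z : EuclideanSpace ℝ (Fin m) => g (‖z‖ ^ 2) • z) ∧
    ∀ a b : EuclideanSpace ℝ (Fin m),
      ‖a - b‖ ≤ (1 / min a₁ a₃) * ‖g (‖a‖ ^ 2) • a - g (‖b‖ ^ 2) • b‖ := by
  set c := min a₁ a₃ with hc
  have hc0 : 0 < c := lt_min ha₁ ha₃
  have hmonoF := strong_mono g g' a₁ a₃ hderiv (fun y hy => (hbounds y hy).1) hmono
    (E := EuclideanSpace ℝ (Fin m))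
  -- the Lipschitz bound for the inverse
  have hlip : ∀ a b : EuclideanSpace ℝ (Fin m),
      ‖a - b‖ ≤ (1 / c) * ‖g (‖a‖ ^ 2) • a - g (‖b‖ ^ 2) • b‖ := by
    intro a b
    rcases eq_or_ne a b with rfl | hab
    · simp only [sub_self, norm_zero]
      positivity
    · have hnz : 0 < ‖a - b‖ := by
        rw [norm_pos_iff]; exact sub_ne_zero.mpr hab
      have h1 := hmonoF a b
      have h2 : ⟪g (‖a‖ ^ 2) • a - g (‖b‖ ^ 2) • b, a - b⟫ ≤
          ‖g (‖a‖ ^ 2) • a - g (‖b‖ ^ 2) • b‖ * ‖a - b‖ := real_inner_le_norm _ _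
      have h3 : c * ‖a - b‖ ^ 2 ≤ ‖g (‖a‖ ^ 2) • a - g (‖b‖ ^ 2) • b‖ * ‖a - b‖ :=
        le_trans h1 h2
      rw [div_mul_eq_mul_div, le_div_iff₀ hc0]
      nlinarith [h3, hnz]
  refine ⟨⟨?_, ?_⟩, hlip⟩
  · -- injective
    intro a b hab
    simp only at hab
    have := hlip a b
    rw [hab, sub_self, norm_zero, mul_zero] at this
    have : ‖a - b‖ = 0 := le_antisymm this (norm_nonneg _)
    rwa [norm_sub_eq_zero_iff] at this
  · -- surjective
    intro w
    have hgcont : ContinuousOn g (Set.Ici 0) := fun y hy =>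
      (hderiv y hy).continuousAt.continuousWithinAt
    rcases eq_or_ne w 0 with rfl | hw
    · exact ⟨0, by simp⟩
    · have hr : 0 < ‖w‖ := norm_pos_iff.mpr hw
      set r := ‖w‖ with hrdef
      set T := r / a₁ with hT
      have hT0 : 0 < T := div_pos hr ha₁
      have hφcont : ContinuousOn (fun t : ℝ => g (t ^ 2) * t) (Set.Icc 0 T) := by
        apply ContinuousOn.mul _ continuousOn_id
        apply hgcont.comp (continuous_pow 2).continuousOn
        intro t _
        exact sq_nonneg t
      have hφ0 : g (0 ^ 2) * 0 ≤ r := by simp; positivity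
      have hφT : r ≤ g (T ^ 2) * T := by
        have h1 : a₁ ≤ g (T ^ 2) := (hbounds _ (sq_nonneg T)).1
        have : a₁ * T ≤ g (T ^ 2) * T := mul_le_mul_of_nonneg_right h1 hT0.le
        rw [hT] at this ⊢
        calc r = a₁ * (r / a₁) := by field_simp
          _ ≤ g ((r / a₁) ^ 2) * (r / a₁) := this
      have := intermediate_value_Icc hT0.le hφcont
      obtain ⟨t, ht, hφt⟩ := this ⟨hφ0, hφT⟩
      refine ⟨(t / r) • w, ?_⟩
      have ht0 : 0 ≤ t := ht.1
      have hnorm : ‖(t / r) • w‖ = t := by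
        rw [norm_smul, Real.norm_eq_abs, abs_of_nonneg (by positivity)]
        field_simp
        rfl
      simp only [hnorm, smul_smul]
      have hφt' : g (t ^ 2) * t = r := hφt
      have : g (t ^ 2) * (t / r) = 1 := by
        rw [mul_div_assoc', hφt']
        field_simp
      rw [this, one_smul]
end
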